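/- Let (Ω, ℱ, P) be a probability space, p ∈ [1, ∞), and β, γ ∈ ℝ with 0 ≤ β < γ ≤ p. Let X : Ω → ℝ be measurable with E[(X⁺)^{p/γ}] < ∞, let Y : Ω → [0, ∞) be measurable with E[Y^p] < ∞, and let x ∈ [0, ∞). Then p · x · E[X⁺ · Y^{p−γ}] · E[Y^p]^{β/p} ≤ p · x · E[(X⁺)^{p/γ}]^{γ/p} · E[Y^p]^{1−(γ−β)/p} ≤ E[(X⁺)^{p/γ}]^{γ/p} · ( (γ−β) · x^{p/(γ−β)} + (p+β−γ) · E[Y^p] ). -/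

import Mathlib

open MeasureTheory

lemma aux_memLp {Ω : Type*} [MeasurableSpace Ω] {P : Measure Ω} {f : Ω → ℝ}
    (hf : Measurable f) (h0 : ∀ ω, 0 ≤ f ω) {r : ℝ} (hr : 0 < r)
    (hint : Integrable (fun ω => f ω ^ r) P) : MemLp f (ENNReal.ofReal r) P := by
  have hq0 : (ENNReal.ofReal r) ≠ 0 := by
    simp only [ne_eq, ENNReal.ofReal_eq_zero, not_le]; linarith
  apply (memLp_norm_rpow_iff (p := ENNReal.ofReal r) (q := ENNReal.ofReal r)
      hf.aestronglyMeasurable hq0 (by simp)).mp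
  rw [ENNReal.div_self hq0 (by simp), memLp_one_iff_integrable,
    ENNReal.toReal_ofReal hr.le]
  refine hint.congr ?_
  filter_upwards with ω
  rw [Real.norm_of_nonneg (h0 ω)]

/-- The combined Hölder–Young estimate (2.2) of the paper, in the case `β < γ`. -/
theorem stmt_0 {Ω : Type*} [MeasurableSpace Ω] (P : Measure Ω) [IsProbabilityMeasure P]
    (p β γ : ℝ) (hp : 1 ≤ p) (hβ : 0 ≤ β) (hβγ : β < γ) (hγp : γ ≤ p)
    (X Y : Ω → ℝ) (hXm : Measurable X) (hYm : Measurable Y) (hY0 : ∀ ω, 0 ≤ Y ω)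
    (hXint : Integrable (fun ω => (max (X ω) 0) ^ (p / γ)) P)
    (hYint : Integrable (fun ω => Y ω ^ p) P)
    (x : ℝ) (hx : 0 ≤ x) :
    p * x * (∫ ω, max (X ω) 0 * Y ω ^ (p - γ) ∂P) * (∫ ω, Y ω ^ p ∂P) ^ (β / p) ≤
      p * x * (∫ ω, (max (X ω) 0) ^ (p / γ) ∂P) ^ (γ / p) *
        (∫ ω, Y ω ^ p ∂P) ^ (1 - (γ - β) / p) ∧
    p * x * (∫ ω, (max (X ω) 0) ^ (p / γ) ∂P) ^ (γ / p) *
        (∫ ω, Y ω ^ p ∂P) ^ (1 - (γ - β) / p) ≤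
      (∫ ω, (max (X ω) 0) ^ (p / γ) ∂P) ^ (γ / p) *
        ((γ - β) * x ^ (p / (γ - β)) + (p + β - γ) * ∫ ω, Y ω ^ p ∂P) := by
  have hp0 : (0:ℝ) < p := lt_of_lt_of_le one_pos hp
  have hγ0 : (0:ℝ) < γ := lt_of_le_of_lt hβ hβγ
  set A := ∫ ω, (max (X ω) 0) ^ (p / γ) ∂P with hAdef
  set B := ∫ ω, Y ω ^ p ∂P with hBdef
  set I := ∫ ω, max (X ω) 0 * Y ω ^ (p - γ) ∂P with hIdef
  have hA : 0 ≤ A :=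
    integral_nonneg fun ω => Real.rpow_nonneg (le_max_right _ _) _
  have hB : 0 ≤ B := integral_nonneg fun ω => Real.rpow_nonneg (hY0 ω) _
  have hpx : 0 ≤ p * x := mul_nonneg hp0.le hx
  -- First inequality
  have key1 : I * B ^ (β / p) ≤ A ^ (γ / p) * B ^ (1 - (γ - β) / p) := by
    rcases eq_or_lt_of_le hγp with hγeq | hγlt
    · subst hγeq
      simp only [hIdef, hAdef, sub_self, Real.rpow_zero, mul_one, div_self hp0.ne',
        Real.rpow_one]
      rw [show 1 - (γ - β) / γ = β / γ by field_simp; ring]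
    · -- Hölder with exponents p/γ and p/(p-γ)
      have hpγ : (0:ℝ) < p - γ := sub_pos.mpr hγlt
      have hconj : (p / γ).HolderConjugate (p / (p - γ)) := by
        rw [Real.holderConjugate_iff]
        constructor
        · rw [lt_div_iff₀ hγ0]; linarith
        · rw [inv_div, inv_div]; field_simp; ring
      have hg_eq : ∀ ω, (Y ω ^ (p - γ)) ^ (p / (p - γ)) = Y ω ^ p := by
        intro ω
        rw [← Real.rpow_mul (hY0 ω)]
        congr 1
        field_simp
      have hf : MemLp (fun ω => max (X ω) 0) (ENNReal.ofReal (p / γ)) P :=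
        aux_memLp (hXm.max measurable_const) (fun ω => le_max_right _ _)
          (div_pos hp0 hγ0) hXint
      have hg : MemLp (fun ω => Y ω ^ (p - γ)) (ENNReal.ofReal (p / (p - γ))) P := by
        refine aux_memLp (hYm.pow_const _) (fun ω => Real.rpow_nonneg (hY0 ω) _)
          (div_pos hp0 hpγ) ?_
        refine hYint.congr ?_
        filter_upwards with ω
        exact (hg_eq ω).symm
      have holder := integral_mul_le_Lp_mul_Lq_of_nonneg (μ := P) hconj
        (Filter.Eventually.of_forall fun ω => le_max_right _ _)
        (Filter.Eventually.of_forall fun ω => Real.rpow_nonneg (hY0 ω) _) hf hg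
      have hI : I ≤ A ^ (γ / p) * B ^ ((p - γ) / p) := by
        rw [hIdef, hAdef, hBdef]
        calc ∫ ω, max (X ω) 0 * Y ω ^ (p - γ) ∂P
            ≤ (∫ ω, max (X ω) 0 ^ (p / γ) ∂P) ^ (1 / (p / γ)) *
              (∫ ω, (Y ω ^ (p - γ)) ^ (p / (p - γ)) ∂P) ^ (1 / (p / (p - γ))) := holder
          _ = (∫ ω, max (X ω) 0 ^ (p / γ) ∂P) ^ (γ / p) *
              (∫ ω, Y ω ^ p ∂P) ^ ((p - γ) / p) := by
              rw [one_div_div, one_div_div]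
              congr 1
              congr 1
              exact integral_congr_ae (Filter.Eventually.of_forall fun ω => hg_eq ω)
      have hsum : 1 - (γ - β) / p = (p - γ) / p + β / p := by field_simp <;> ring
      rw [hsum, Real.rpow_add_of_nonneg hB (div_nonneg hpγ.le hp0.le)
        (div_nonneg hβ hp0.le), ← mul_assoc]
      exact mul_le_mul_of_nonneg_right hI (Real.rpow_nonneg hB _)
  -- Second inequality (Young)
  have key2 : p * x * B ^ (1 - (γ - β) / p) ≤
      (γ - β) * x ^ (p / (γ - β)) + (p + β - γ) * B := by
    have hγβ : (0:ℝ) < γ - β := sub_pos.mpr hβγ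
    rcases eq_or_lt_of_le (show γ - β ≤ p by linarith) with heq | hlt
    · rw [← heq]
      simp only [div_self hγβ.ne', Real.rpow_one, sub_self, Real.rpow_zero, mul_one]
      nlinarith [hB]
    · have hconj : (p / (γ - β)).HolderConjugate (p / (p - γ + β)) := by
        rw [Real.holderConjugate_iff]
        constructor
        · rw [lt_div_iff₀ hγβ]; linarith
        · rw [inv_div, inv_div]; field_simp; ring
      have young := Real.young_inequality_of_nonneg hx
        (Real.rpow_nonneg hB ((p - γ + β) / p)) hconj
      have hpγβ : p - γ + β ≠ 0 := by intro h; linarith [hlt, hγβ, (by linarith : (0:ℝ) < p - γ + β)]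
      have hc : (B ^ ((p - γ + β) / p)) ^ (p / (p - γ + β)) = B := by
        rw [← Real.rpow_mul hB]
        rw [show (p - γ + β) / p * (p / (p - γ + β)) = 1 by field_simp]
        exact Real.rpow_one B
      rw [hc, div_div_eq_mul_div, div_div_eq_mul_div] at young
      have h2 := mul_le_mul_of_nonneg_left young hp0.le
      have h3 : p * (x ^ (p / (γ - β)) * (γ - β) / p + B * (p - γ + β) / p) =
          (γ - β) * x ^ (p / (γ - β)) + (p + β - γ) * B := by
        field_simp <;> ring
      have h4 : 1 - (γ - β) / p = (p - γ + β) / p := by field_simp; ring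
      rw [h4]
      calc p * x * B ^ ((p - γ + β) / p) = p * (x * B ^ ((p - γ + β) / p)) := by ring
        _ ≤ p * (x ^ (p / (γ - β)) * (γ - β) / p + B * (p - γ + β) / p) := h2
        _ = (γ - β) * x ^ (p / (γ - β)) + (p + β - γ) * B := h3
  constructor
  · calc p * x * I * B ^ (β / p) = (p * x) * (I * B ^ (β / p)) := by ring
      _ ≤ (p * x) * (A ^ (γ / p) * B ^ (1 - (γ - β) / p)) :=
          mul_le_mul_of_nonneg_left key1 hpx
      _ = p * x * A ^ (γ / p) * B ^ (1 - (γ - β) / p) := by ring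
  · calc p * x * A ^ (γ / p) * B ^ (1 - (γ - β) / p)
        = A ^ (γ / p) * (p * x * B ^ (1 - (γ - β) / p)) := by ring
      _ ≤ A ^ (γ / p) * ((γ - β) * x ^ (p / (γ - β)) + (p + β - γ) * B) :=
          mul_le_mul_of_nonneg_left key2 (Real.rpow_nonneg hA _)
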